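/- Let σ_{π₁},…,σ_{π_n} ∈ Stmt₀^ω and ζ_{π₁},…,ζ_{π_n} be computations with ζ_{π_j} ◁ σ_{π_j} for every j, let σ be the composed trace with σ_t = ((σ_{π₁})_{π₁})_t; … ; ((σ_{π_n})_{π_n})_t, and let ζ̂′ = ∅[π₁, ζ_{π₁}]…[π_n, ζ_{π_n}]. Then the adapted hyper-computation of (ζ_{π₁},…,ζ_{π_n}) matches combine(σ, Seq(ζ̂′)). -/

import Mathlib

namespace TSLMC

open scoped Classical

/-! ### Theories, function terms, assignments -/

/-- A theory: interpretation of function symbols, plus distinguished values true/false. -/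
structure Thy (V F : Type) where
  ε : F → List V → V
  vtrue : V
  vfalse : V

/-- Function terms over inputs `I`, cells `C` and function symbols `F`. -/
inductive FTerm (I C F : Type) : Type where
  | inp  : I → FTerm I C F
  | cell : C → FTerm I C F
  | app  : F → List (FTerm I C F) → FTerm I C F

/-- An assignment gives values to inputs and cells. -/
abbrev Assign (V I C : Type) := I ⊕ C → V

variable {V I C F Pi : Type}

/-- Evaluation of a function term under an assignment. -/
def FTerm.eval (T : Thy V F) (a : Assign V I C) : FTerm I C F → V
  | .inp i => a (.inl i)
  | .cell c => a (.inr c)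
  | .app f ts => T.ε f (ts.attach.map fun t => t.1.eval T a)
decreasing_by
  have := List.sizeOf_lt_of_mem t.2
  simp only [FTerm.app.sizeOf_spec]
  omega

/-- A predicate term is a function term evaluating only to true or false. -/
def IsPredTerm (T : Thy V F) (τ : FTerm I C F) : Prop :=
  ∀ a : Assign V I C, τ.eval T a = T.vtrue ∨ τ.eval T a = T.vfalse

/-- The theory contains (at least) equality, negation, conjunction and a true constant,
with their usual interpretations, and true ≠ false. -/
structure Ops (V F : Type) (T : Thy V F) where
  feq : F
  fneg : F
  fand : F
  ftrue : F
  heq : ∀ x y : V, T.ε feq [x, y] = if x = y then T.vtrue else T.vfalse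
  hneg : ∀ x : V, T.ε fneg [x] = if x = T.vtrue then T.vfalse else T.vtrue
  hand : ∀ x y : V, T.ε fand [x, y] = if x = T.vtrue ∧ y = T.vtrue then T.vtrue else T.vfalse
  htrue : T.ε ftrue [] = T.vtrue
  tne : T.vtrue ≠ T.vfalse

/-! ### TSL(T) formulas -/

/-- TSL(T) formulas (atoms: predicate terms and update terms `⟦c ↞ τ⟧`). -/
inductive TSL (I C F : Type) : Type where
  | pred : FTerm I C F → TSL I C F
  | upd  : C → FTerm I C F → TSL I C F
  | not  : TSL I C F → TSL I C F
  | and  : TSL I C F → TSL I C F → TSL I C F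
  | next : TSL I C F → TSL I C F
  | untl : TSL I C F → TSL I C F → TSL I C F

/-- `prevA init ζ t` is `ζ (t-1)`, with the fixed initial assignment at `t = 0`. -/
def prevA (init : Assign V I C) (ζ : ℕ → Assign V I C) : ℕ → Assign V I C
  | 0 => init
  | t + 1 => ζ t

/-- Satisfaction of a TSL(T) formula over a computation at a time point. -/
def TSL.sat (T : Thy V F) (init : Assign V I C) (ζ : ℕ → Assign V I C) :
    TSL I C F → ℕ → Prop
  | .pred τ, t => τ.eval T (ζ t) = T.vtrue
  | .upd c τ, t => τ.eval T (prevA init ζ t) = ζ t (.inr c)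
  | .not φ, t => ¬ φ.sat T init ζ t
  | .and φ ψ, t => φ.sat T init ζ t ∧ ψ.sat T init ζ t
  | .next φ, t => φ.sat T init ζ (t + 1)
  | .untl φ ψ, t => ∃ t', t ≤ t' ∧ ψ.sat T init ζ t' ∧
      ∀ t'', t ≤ t'' → t'' < t' → φ.sat T init ζ t''

/-- The list of predicate terms appearing in a TSL(T) formula. -/
def TSL.predList : TSL I C F → List (FTerm I C F)
  | .pred τ => [τ]
  | .upd _ _ => []
  | .not φ => φ.predList
  | .and φ ψ => φ.predList ++ ψ.predList
  | .next φ => φ.predList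
  | .untl φ ψ => φ.predList ++ ψ.predList

/-- The list of update terms appearing in a TSL(T) formula. -/
def TSL.updList : TSL I C F → List (C × FTerm I C F)
  | .pred _ => []
  | .upd c τ => [(c, τ)]
  | .not φ => φ.updList
  | .and φ ψ => φ.updList ++ ψ.updList
  | .next φ => φ.updList
  | .untl φ ψ => φ.updList ++ ψ.updList

/-! ### LTL -/

/-- LTL formulas over atomic propositions `A`. -/
inductive LTL (A : Type) : Type where
  | atom : A → LTL A
  | not : LTL A → LTL A
  | and : LTL A → LTL A → LTL A
  | next : LTL A → LTL A
  | untl : LTL A → LTL A → LTL A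

/-- Standard LTL satisfaction over words of sets of atomic propositions. -/
def LTL.sat (w : ℕ → Set A) : LTL A → ℕ → Prop
  | .atom a, t => a ∈ w t
  | .not φ, t => ¬ φ.sat w t
  | .and φ ψ, t => φ.sat w t ∧ ψ.sat w t
  | .next φ, t => φ.sat w (t + 1)
  | .untl φ ψ, t => ∃ t', t ≤ t' ∧ ψ.sat w t' ∧ ∀ t'', t ≤ t'' → t'' < t' → φ.sat w t''

/-- Atomic propositions: predicate terms and update terms. -/
abbrev AP (I C F : Type) := FTerm I C F ⊕ (C × FTerm I C F)

/-- The LTL formula obtained from a TSL(T) formula by treating predicate and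
update terms as atomic propositions. -/
def TSL.toLTL : TSL I C F → LTL (AP I C F)
  | .pred τ => .atom (.inl τ)
  | .upd c τ => .atom (.inr (c, τ))
  | .not φ => .not φ.toLTL
  | .and φ ψ => .and φ.toLTL ψ.toLTL
  | .next φ => .next φ.toLTL
  | .untl φ ψ => .untl φ.toLTL ψ.toLTL

/-- `SeqW T init ζ ρ υ t` is the set of predicate terms of `ρ` and update terms of `υ`
that hold at time `t` of the computation `ζ`. -/
def SeqW (T : Thy V F) (init : Assign V I C) (ζ : ℕ → Assign V I C)
    (ρ : Set (FTerm I C F)) (υ : Set (C × FTerm I C F)) : ℕ → Set (AP I C F) :=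
  fun t => {a | Sum.elim
    (fun τ => τ ∈ ρ ∧ TSL.sat T init ζ (.pred τ) t)
    (fun u => u ∈ υ ∧ TSL.sat T init ζ (.upd u.1 u.2) t) a}

/-! ### Program statements, matching, feasibility -/

/-- Basic program statements. -/
inductive Stmt0 (I C F : Type) : Type where
  | assert : FTerm I C F → Stmt0 I C F
  | assign : C → FTerm I C F → Stmt0 I C F
  | havoc : C → Stmt0 I C F

/-- Program statements: nonempty finite sequences of basic statements. -/
abbrev Stmt (I C F : Type) := {l : List (Stmt0 I C F) // l ≠ []}

/-- A computation matches a trace of basic statements at time `t`. -/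
def matchesAt (T : Thy V F) (init : Assign V I C) (ζ : ℕ → Assign V I C)
    (σ : ℕ → Stmt0 I C F) (t : ℕ) : Prop :=
  match σ t with
  | .assert τ => τ.eval T (prevA init ζ t) = T.vtrue ∧
      ∀ c : C, ζ t (.inr c) = prevA init ζ t (.inr c)
  | .assign c τ => ζ t (.inr c) = τ.eval T (prevA init ζ t) ∧
      ∀ c', c' ≠ c → ζ t (.inr c') = prevA init ζ t (.inr c')
  | .havoc c => ∀ c', c' ≠ c → ζ t (.inr c') = prevA init ζ t (.inr c')

/-- A computation matches a trace of basic statements. -/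
def Matches (T : Thy V F) (init : Assign V I C) (ζ : ℕ → Assign V I C)
    (σ : ℕ → Stmt0 I C F) : Prop :=
  ∀ t, matchesAt T init ζ σ t

/-- Position (index of the statement, offset inside it) of the `j`-th basic statement
in the flattening of a trace of composed statements. -/
def fpos (σ : ℕ → Stmt I C F) : ℕ → ℕ × ℕ
  | 0 => (0, 0)
  | j + 1 =>
    let p := fpos σ j
    if p.2 + 1 < ((σ p.1).1).length then (p.1, p.2 + 1) else (p.1 + 1, 0)

/-- The flattening of a trace of composed statements into basic statements. -/
def flatten (σ : ℕ → Stmt I C F) (j : ℕ) : Stmt0 I C F :=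
  ((σ (fpos σ j).1).1).getD (fpos σ j).2 (((σ (fpos σ j).1).1).head (σ (fpos σ j).1).2)

/-- A computation matches a trace of composed statements (via its flattening). -/
def MatchesC (T : Thy V F) (init : Assign V I C) (ζ : ℕ → Assign V I C)
    (σ : ℕ → Stmt I C F) : Prop :=
  Matches T init ζ (flatten σ)

/-- A trace of composed statements is feasible if some computation matches it. -/
def Feasible (T : Thy V F) (init : Assign V I C) (σ : ℕ → Stmt I C F) : Prop :=
  ∃ ζ, MatchesC T init ζ σ

/-- A trace of basic statements is feasible if some computation matches it. -/
def Feasible0 (T : Thy V F) (init : Assign V I C) (σ : ℕ → Stmt0 I C F) : Prop :=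
  ∃ ζ, Matches T init ζ σ

/-! ### Büchi automata -/

/-- A Büchi automaton. -/
structure Buchi (A : Type) (Q : Type) where
  q0 : Q
  δ : Q → A → Q → Prop
  Acc : Set Q

/-- A run of a Büchi automaton on a word. -/
def Buchi.IsRun {A Q : Type} (B : Buchi A Q) (σ : ℕ → A) (r : ℕ → Q) : Prop :=
  r 0 = B.q0 ∧ ∀ t, B.δ (r t) (σ t) (r (t + 1))

/-- Büchi acceptance: some run visits accepting states infinitely often. -/
def Buchi.Accepts {A Q : Type} (B : Buchi A Q) (σ : ℕ → A) : Prop :=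
  ∃ r, B.IsRun σ r ∧ ∀ n, ∃ m, n ≤ m ∧ r m ∈ B.Acc

/-- A program automaton over basic statements satisfies a TSL(T) formula if every
computation matching an accepted trace satisfies the formula. -/
def SatisfiesTSL {Qp : Type} (T : Thy V F) (init : Assign V I C)
    (P : Buchi (Stmt0 I C F) Qp) (φ : TSL I C F) : Prop :=
  ∀ σ, P.Accepts σ → ∀ ζ, Matches T init ζ σ → φ.sat T init ζ 0

/-! ### The combine construction and the Büchi program product -/

/-- Extended cell set: original cells, inputs-as-cells, and fresh `tmp` cells. -/
abbrev CStar (I C : Type) := (C ⊕ I) ⊕ ℕ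

/-- Embedding of terms over inputs/cells into terms over the extended cell set. -/
def FTerm.embed : FTerm I C F → FTerm Empty (CStar I C) F
  | .inp i => .cell (.inl (.inr i))
  | .cell c => .cell (.inl (.inl c))
  | .app f ts => .app f (ts.attach.map fun t => t.1.embed)
decreasing_by
  have := List.sizeOf_lt_of_mem t.2
  simp only [FTerm.app.sizeOf_spec]
  omega

/-- Embedding of basic statements into statements over the extended cell set. -/
def Stmt0.embed : Stmt0 I C F → Stmt0 Empty (CStar I C) F
  | .assert τ => .assert τ.embed
  | .assign c τ => .assign (.inl (.inl c)) τ.embed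
  | .havoc c => .havoc (.inl (.inl c))

/-- Conjunction of a list of terms (via the theory's conjunction symbol). -/
def conjTerm (T : Thy V F) (O : Ops V F T) :
    List (FTerm Empty (CStar I C) F) → FTerm Empty (CStar I C) F
  | [] => .app O.ftrue []
  | τ :: ts => .app O.fand [τ, conjTerm T O ts]

/-- The `combine` construction: `save_values; s; new_inputs; check_preds_l; check_updates_l`. -/
noncomputable def combine (T : Thy V F) (O : Ops V F T) (ρ : List (FTerm I C F))
    (υ : List (C × FTerm I C F)) (inps : List I)
    (s : List (Stmt0 I C F)) (l : Set (AP I C F)) : Stmt Empty (CStar I C) F :=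
  ⟨(υ.mapIdx fun j u => Stmt0.assign (Sum.inr j) u.2.embed)
    ++ s.map Stmt0.embed
    ++ (inps.map fun i => Stmt0.havoc (Sum.inl (Sum.inr i)))
    ++ [Stmt0.assert (conjTerm T O
          (ρ.map fun τ => if Sum.inl τ ∈ l then τ.embed else .app O.fneg [τ.embed])),
        Stmt0.assert (conjTerm T O
          (υ.mapIdx fun j u =>
            let eqt : FTerm Empty (CStar I C) F :=
              .app O.feq [.cell (Sum.inl (Sum.inl u.1)), .cell (Sum.inr j)]
            if Sum.inr u ∈ l then eqt else .app O.fneg [eqt]))],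
    by simp⟩

/-- Lifting an automaton over basic statements to an automaton over (composed) statements. -/
def liftB {Qp : Type} (P : Buchi (Stmt0 I C F) Qp) : Buchi (Stmt I C F) Qp where
  q0 := P.q0
  δ := fun q w q' => ∃ s, P.δ q s q' ∧ w = ⟨[s], by simp⟩
  Acc := P.Acc

/-- The combined product `P ⊗ A` of a program automaton and a Büchi automaton over
sets of predicate/update terms. -/
noncomputable def product {Qp Qa : Type} (T : Thy V F) (O : Ops V F T)
    (P : Buchi (Stmt I C F) Qp) (A : Buchi (Set (AP I C F)) Qa)
    (ρ : List (FTerm I C F)) (υ : List (C × FTerm I C F)) (inps : List I) :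
    Buchi (Stmt Empty (CStar I C) F) (Qp × Qa) where
  q0 := (P.q0, A.q0)
  δ := fun x w y => ∃ s l, P.δ x.1 s y.1 ∧ A.δ x.2 l y.2 ∧ w = combine T O ρ υ inps s.1 l
  Acc := {x | x.2 ∈ A.Acc}

/-! ### HyperTSL(T) -/

/-- HyperTSL(T) formulas: a quantifier prefix over trace variables, followed by a
quantifier-free formula over trace-indexed inputs and cells. -/
inductive HyperTSL (I C F Pi : Type) : Type where
  | qf : TSL (I × Pi) (C × Pi) F → HyperTSL I C F Pi
  | all : Pi → HyperTSL I C F Pi → HyperTSL I C F Pi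
  | ex : Pi → HyperTSL I C F Pi → HyperTSL I C F Pi

/-- Extension `ζ̂[π, ζ]` of a hyper-computation by a computation for trace variable `π`. -/
noncomputable def extendH (ζh : ℕ → Assign V (I × Pi) (C × Pi)) (π : Pi)
    (ζ : ℕ → Assign V I C) : ℕ → Assign V (I × Pi) (C × Pi) :=
  fun t x =>
    match x with
    | .inl (i, π') => if π' = π then ζ t (.inl i) else ζh t (.inl (i, π'))
    | .inr (c, π') => if π' = π then ζ t (.inr c) else ζh t (.inr (c, π'))

/-- Satisfaction of a HyperTSL(T) formula. -/
noncomputable def HyperTSL.sat (T : Thy V F) (init : Assign V (I × Pi) (C × Pi))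
    (Z : Set (ℕ → Assign V I C)) :
    HyperTSL I C F Pi → (ℕ → Assign V (I × Pi) (C × Pi)) → ℕ → Prop
  | .qf ψ, ζh, t => ψ.sat T init ζh t
  | .all π φ, ζh, t => ∀ ζ ∈ Z, φ.sat T init Z (extendH ζh π ζ) t
  | .ex π φ, ζh, t => ∃ ζ ∈ Z, φ.sat T init Z (extendH ζh π ζ) t

/-- Lift an assignment to a hyper-assignment (every trace gets the same values). -/
def liftInit (init : Assign V I C) : Assign V (I × Pi) (C × Pi) :=
  fun x => match x with
  | .inl (i, _) => init (.inl i)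
  | .inr (c, _) => init (.inr c)

/-- The set of computations matching accepted traces of a program automaton. -/
def Zof {Qp : Type} (T : Thy V F) (init : Assign V I C)
    (P : Buchi (Stmt0 I C F) Qp) : Set (ℕ → Assign V I C) :=
  {ζ | ∃ σ, P.Accepts σ ∧ Matches T init ζ σ}

/-- A program automaton satisfies a HyperTSL(T) formula. -/
noncomputable def SatisfiesHyper {Qp : Type} (T : Thy V F) (init : Assign V I C)
    (P : Buchi (Stmt0 I C F) Qp) (φ : HyperTSL I C F Pi) : Prop :=
  φ.sat T (liftInit init) (Zof T init P) (fun _ => liftInit init) 0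

/-- Renaming of terms: cell `c` becomes `c_π`, input `i` becomes `i_π`. -/
def FTerm.rename (π : Pi) : FTerm I C F → FTerm (I × Pi) (C × Pi) F
  | .inp i => .inp (i, π)
  | .cell c => .cell (c, π)
  | .app f ts => .app f (ts.attach.map fun t => t.1.rename π)
decreasing_by
  have := List.sizeOf_lt_of_mem t.2
  simp only [FTerm.app.sizeOf_spec]
  omega

/-- Renaming of basic statements to a trace variable. -/
def Stmt0.rename (π : Pi) : Stmt0 I C F → Stmt0 (I × Pi) (C × Pi) F
  | .assert τ => .assert (τ.rename π)
  | .assign c τ => .assign (c, π) (τ.rename π)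
  | .havoc c => .havoc (c, π)

/-- The `n`-fold self-composition of a program automaton. -/
def selfComp {Qp : Type} (P : Buchi (Stmt0 I C F) Qp) (n : ℕ) :
    Buchi (Stmt (I × Fin n) (C × Fin n) F) (Fin n → Qp) where
  q0 := fun _ => P.q0
  δ := fun q w q' => ∃ ss : Fin n → Stmt0 I C F,
        (∀ j, P.δ (q j) (ss j) (q' j)) ∧
        w.1 = (List.finRange n).map fun j => (ss j).rename j
  Acc := Set.univ

/-- The `m`-fold self-composition, using the first `m` of `n` trace variables. -/
def selfCompInto {Qp : Type} (P : Buchi (Stmt0 I C F) Qp) (m n : ℕ) (h : m ≤ n) :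
    Buchi (Stmt (I × Fin n) (C × Fin n) F) (Fin m → Qp) where
  q0 := fun _ => P.q0
  δ := fun q w q' => ∃ ss : Fin m → Stmt0 I C F,
        (∀ j, P.δ (q j) (ss j) (q' j)) ∧
        w.1 = (List.finRange m).map fun j => (ss j).rename (Fin.castLE h j)
  Acc := Set.univ

end TSLMC

/-! ### k-feasibility and the automaton `P_k` -/

namespace TSLMC
open scoped Classical
variable {V I C F Pi : Type}

/-- The statement `assert(true)`. -/
def trueStmt (T : Thy V F) (O : Ops V F T) : Stmt I C F :=
  ⟨[.assert (.app O.ftrue [])], by simp⟩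

/-- Extend a finite window of statements by `assert(true)^ω`. -/
def extendTrue (T : Thy V F) (O : Ops V F T) (ss : List (Stmt I C F)) : ℕ → Stmt I C F :=
  fun t => if h : t < ss.length then ss.get ⟨t, h⟩ else trueStmt T O

/-- A finite window of statements is feasible if, followed by `assert(true)^ω`, it is
feasible for some initial assignment. -/
def WinFeasible (T : Thy V F) (O : Ops V F T) (ss : List (Stmt I C F)) : Prop :=
  ∃ init : Assign V I C, Feasible T init (extendTrue T O ss)

/-- The window `σ_j … σ_{j+k-1}` of a trace. -/
def window (σ : ℕ → α) (j k : ℕ) : List α :=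
  (List.range k).map fun i => σ (j + i)

/-- A trace is `k`-feasible if no window of `k` consecutive statements is infeasible
for all initial assignments. -/
def KFeasible (T : Thy V F) (O : Ops V F T) (k : ℕ) (σ : ℕ → Stmt I C F) : Prop :=
  ∀ j, WinFeasible T O (window σ j k)

/-- Chains of transitions of an automaton. -/
def chain {S Qp : Type} (P : Buchi S Qp) : Qp → List (S × Qp) → Prop
  | _, [] => True
  | q, (s, q') :: rest => P.δ q s q' ∧ chain P q' rest

/-- The last state of an alternating state/statement sequence. -/
def lastQ {S Qp : Type} (st : Qp × List (S × Qp)) : Qp :=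
  (st.2.getLast?).elim st.1 Prod.snd

/-- The statements of an alternating state/statement sequence. -/
def stmts {S Qp : Type} (st : Qp × List (S × Qp)) : List S :=
  st.2.map Prod.fst

/-- Valid states of `P_k`: chains of transitions of `P` of length `k-1`, or shorter
ones starting at the initial state. -/
def ValidSt {S Qp : Type} (P : Buchi S Qp) (k : ℕ) (st : Qp × List (S × Qp)) : Prop :=
  chain P st.1 st.2 ∧ (st.2.length = k - 1 ∨ (st.2.length < k - 1 ∧ st.1 = P.q0))

/-- Extend an alternating sequence by a transition, dropping the first entry if the
window is full. -/
def push {S Qp : Type} (k : ℕ) (st : Qp × List (S × Qp)) (s : S) (q' : Qp) :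
    Qp × List (S × Qp) :=
  let l' := st.2 ++ [(s, q')]
  if k ≤ l'.length then
    match l' with
    | [] => (st.1, [])
    | e :: rest => (e.2, rest)
  else (st.1, l')

/-- The automaton `P_k`: `P` without `k`-infeasibility. -/
def Pk {Qp : Type} (T : Thy V F) (O : Ops V F T) (P : Buchi (Stmt I C F) Qp) (k : ℕ) :
    Buchi (Stmt I C F) (Qp × List (Stmt I C F × Qp)) where
  q0 := (P.q0, [])
  δ := fun st s st' => ValidSt P k st ∧ ValidSt P k st' ∧
        ∃ q', P.δ (lastQ st) s q' ∧ WinFeasible T O (stmts st ++ [s]) ∧ st' = push k st s q'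
  Acc := {st | lastQ st ∈ P.Acc}

/-! ### Infeasible accepting cycles and their removal -/

/-- The trace `(s₁ … s_n)^ω` of a cycle. -/
def cycTrace (T : Thy V F) (O : Ops V F T) {Qp : Type}
    (ϱ : List (Qp × Stmt I C F × Qp)) : ℕ → Stmt I C F :=
  fun t => ((ϱ[t % ϱ.length]?).map fun e => e.2.1).getD (trueStmt T O)

/-- `ϱ` is a cycle of transitions of `B`. -/
def IsCycle {S Qp : Type} (B : Buchi S Qp) (ϱ : List (Qp × S × Qp)) : Prop :=
  ϱ ≠ [] ∧ (∀ e ∈ ϱ, B.δ e.1 e.2.1 e.2.2) ∧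
  (∀ i, (h : i + 1 < ϱ.length) →
    (ϱ.get ⟨i + 1, h⟩).1 = (ϱ.get ⟨i, Nat.lt_of_succ_lt h⟩).2.2) ∧
  ∀ h : ϱ ≠ [], (ϱ.getLast h).2.2 = (ϱ.head h).1

/-- An infeasible accepting cycle. -/
def InfAccCycle {Qp : Type} (T : Thy V F) (O : Ops V F T)
    (B : Buchi (Stmt I C F) Qp) (ϱ : List (Qp × Stmt I C F × Qp)) : Prop :=
  IsCycle B ϱ ∧ (∃ e ∈ ϱ, e.1 ∈ B.Acc) ∧
  ∀ init : Assign V I C, ¬ Feasible T init (cycTrace T O ϱ)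

/-- A trace ends with the infinite repetition of the statements of the cycle `ϱ`. -/
def EndsWithCyc {Qp : Type} (T : Thy V F) (O : Ops V F T)
    (σ : ℕ → Stmt I C F) (ϱ : List (Qp × Stmt I C F × Qp)) : Prop :=
  ∃ N, ∀ j, σ (N + j) = cycTrace T O ϱ j

/-- The automaton `A_ϱ`, accepting exactly the traces ending with `ϱ^ω`. -/
def cycAut {Qp : Type} (ϱ : List (Qp × Stmt I C F × Qp)) :
    Buchi (Stmt I C F) (Option (Fin ϱ.length)) where
  q0 := none
  δ := fun st s st' =>
    match st with
    | none => st' = none ∨ ∃ h : ϱ ≠ [],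
        s = (ϱ.head h).2.1 ∧
        st' = some ⟨1 % ϱ.length, Nat.mod_lt _ (List.length_pos_iff.mpr h)⟩
    | some i => s = (ϱ.get i).2.1 ∧
        st' = some ⟨((i : ℕ) + 1) % ϱ.length,
          Nat.mod_lt _ (Nat.lt_of_le_of_lt (Nat.zero_le _) i.isLt)⟩
  Acc := {st | st ≠ none}

/-- A Büchi automaton bundled with its state type. -/
structure BAut (A : Type) : Type 1 where
  Q : Type
  B : Buchi A Q

/-- One removal step: remove (the languages of the automata `A_ϱ` for) a set of
infeasible accepting cycles from an automaton. -/
def RemStep (T : Thy V F) (O : Ops V F T) (x y : BAut (Stmt I C F)) : Prop :=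
  ∃ Cset : Set (List (x.Q × Stmt I C F × x.Q)),
    (∀ ϱ ∈ Cset, InfAccCycle T O x.B ϱ) ∧
    ∀ σ, y.B.Accepts σ ↔ (x.B.Accepts σ ∧ ∀ ϱ ∈ Cset, ¬ EndsWithCyc T O σ ϱ)

/-- `k'` iterations of removing infeasible accepting cycles. -/
def RemChain (T : Thy V F) (O : Ops V F T) :
    ℕ → BAut (Stmt I C F) → BAut (Stmt I C F) → Prop
  | 0, x, y => y = x
  | k' + 1, x, y => ∃ z, RemChain T O k' x z ∧ RemStep T O z y

/-- The universal projection of (a refinement of) the combined product: keep the first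
`m` of the `n` statements of each `combine`-labelled transition. -/
noncomputable def projU {Q' : Type} (T : Thy V F) (O : Ops V F T) {m n : ℕ}
    (_hm : 0 < m) (hmn : m ≤ n)
    (ρ : List (FTerm (I × Fin n) (C × Fin n) F))
    (υ : List ((C × Fin n) × FTerm (I × Fin n) (C × Fin n) F))
    (inps : List (I × Fin n))
    (B : Buchi (Stmt Empty (CStar (I × Fin n) (C × Fin n)) F) Q') :
    Buchi (Stmt (I × Fin n) (C × Fin n) F) Q' where
  q0 := B.q0
  δ := fun q w q' => ∃ (ss : Fin n → Stmt0 (I × Fin n) (C × Fin n) F)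
        (l : Set (AP (I × Fin n) (C × Fin n) F)),
        B.δ q (combine T O ρ υ inps ((List.finRange n).map ss) l) q' ∧
        w.1 = (List.finRange m).map fun j => ss (Fin.castLE hmn j)
  Acc := B.Acc

/-- The formula `∀π₁ … ∀π_m ∃π_{m+1} … ∃π_n. ψ`. -/
def AEform (m n : ℕ) (ψ : TSL (I × Fin n) (C × Fin n) F) : HyperTSL I C F (Fin n) :=
  (List.finRange n).foldr
    (fun (j : Fin n) acc => if (j : ℕ) < m then HyperTSL.all j acc else HyperTSL.ex j acc)
    (.qf ψ)

end TSLMC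
/-! ### Reduced and adapted computations -/

namespace TSLMC
open scoped Classical
variable {V I C F Pi : Type}

/-- The index `ι(t) = B·(t+1) − 3` for blocks of length `B`. -/
def iotaIdx (B t : ℕ) : ℕ := B * (t + 1) - 3

/-- The reduced computation: the combined computation at the indices `ι(t)`,
restricted to the original inputs and cells. -/
def reduceC (B : ℕ) (ζ : ℕ → Assign V Empty (CStar I C)) : ℕ → Assign V I C :=
  fun t x => ζ (iotaIdx B t) (.inr (.inl x.swap))

/-- The reduced computation of trace variable `j`: the combined hyper-computation at
the indices `ι(t)`, restricted to the `j`-indexed inputs and cells, renamed back. -/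
def reduceTr {n : ℕ} (B : ℕ) (j : Fin n)
    (ζ : ℕ → Assign V Empty (CStar (I × Fin n) (C × Fin n))) : ℕ → Assign V I C :=
  fun t x => ζ (iotaIdx B t)
    (.inr (.inl (match x with | .inl i => .inr (i, j) | .inr c => .inl (c, j))))

/-- Assembling a hyper-computation from one computation per trace variable
(`∅[π₁, ζ₁]…[π_n, ζ_n]`). -/
def assembleH {n : ℕ} (red : Fin n → ℕ → Assign V I C) :
    ℕ → Assign V (I × Fin n) (C × Fin n) :=
  fun t x => match x with
  | .inl (i, j) => red j t (.inl i)
  | .inr (c, j) => red j t (.inr c)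

/-- The adapted computation `ζ̃` of a computation `ζ`. -/
noncomputable def adapt (T : Thy V F) (upds : List (C × FTerm I C F)) (inps : List I)
    (init : Assign V I C) (initC : Assign V Empty (CStar I C))
    (ζ : ℕ → Assign V I C) : ℕ → Assign V Empty (CStar I C) := fun idx x =>
  let m := upds.length
  let k := inps.length
  let b := idx / (m + k + 3)
  let i := idx % (m + k + 3)
  let newTmp : ℕ → V := fun p =>
    ((upds[p]?).map fun u => u.2.eval T (prevA init ζ b)).getD (initC (.inr (.inr p)))
  let oldTmp : ℕ → V := fun p =>
    match b with
    | 0 => initC (.inr (.inr p))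
    | b' + 1 => ((upds[p]?).map fun u => u.2.eval T (prevA init ζ b')).getD
        (initC (.inr (.inr p)))
  match x with
  | .inl e => e.elim
  | .inr (.inr p) => if i < m then (if p ≤ i then newTmp p else oldTmp p) else newTmp p
  | .inr (.inl (.inl c)) => if i < m then prevA init ζ b (.inr c) else ζ b (.inr c)
  | .inr (.inl (.inr ii)) =>
      if i < m + 1 then prevA init ζ b (.inl ii)
      else if i ≤ m + k then
        (if inps.idxOf ii < i - m then ζ b (.inl ii) else prevA init ζ b (.inl ii))
      else ζ b (.inl ii)

/-- The adapted hyper-computation of computations `ζ_{π₁}, …, ζ_{π_n}`. -/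
noncomputable def hadapt {n : ℕ} (T : Thy V F)
    (upds : List ((C × Fin n) × FTerm (I × Fin n) (C × Fin n) F))
    (inps : List (I × Fin n)) (init : Assign V I C)
    (initC : Assign V Empty (CStar (I × Fin n) (C × Fin n)))
    (ζs : Fin n → ℕ → Assign V I C) :
    ℕ → Assign V Empty (CStar (I × Fin n) (C × Fin n)) := fun idx x =>
  let m := upds.length
  let k := inps.length
  let b := idx / (m + n + k + 2)
  let i := idx % (m + n + k + 2)
  let ζ' : ℕ → Assign V (I × Fin n) (C × Fin n) := assembleH ζs
  let hinit : Assign V (I × Fin n) (C × Fin n) := liftInit init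
  let newTmp : ℕ → V := fun p =>
    ((upds[p]?).map fun u => u.2.eval T (prevA hinit ζ' b)).getD (initC (.inr (.inr p)))
  let oldTmp : ℕ → V := fun p =>
    match b with
    | 0 => initC (.inr (.inr p))
    | b' + 1 => ((upds[p]?).map fun u => u.2.eval T (prevA hinit ζ' b')).getD
        (initC (.inr (.inr p)))
  match x with
  | .inl e => e.elim
  | .inr (.inr p) => if i < m then (if p ≤ i then newTmp p else oldTmp p) else newTmp p
  | .inr (.inl (.inl cj)) =>
      if i < m then prevA hinit ζ' b (.inr cj)
      else if i < m + n then
        (if (cj.2 : ℕ) < i - m + 1 then ζs cj.2 b (.inr cj.1)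
         else prevA hinit ζ' b (.inr cj))
      else ζ' b (.inr cj)
  | .inr (.inl (.inr ij)) =>
      if i < m + n then prevA hinit ζ' b (.inl ij)
      else if i < m + n + k then
        (if inps.idxOf ij < i - (m + n) + 1 then ζ' b (.inl ij)
         else prevA hinit ζ' b (.inl ij))
      else ζ' b (.inl ij)

/-- The composed trace `σ_t = ((σ_{π₁})_{π₁})_t; … ; ((σ_{π_n})_{π_n})_t`. -/
def composedTrace {n : ℕ} (σs : Fin n → ℕ → Stmt0 I C F) (t : ℕ) :
    List (Stmt0 (I × Fin n) (C × Fin n) F) :=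
  (List.finRange n).map fun j => (σs j t).rename j

/-- The composed trace, as a trace of (nonempty) program statements. -/
def composedStmt {n : ℕ} (hn : 0 < n) (σs : Fin n → ℕ → Stmt0 I C F) (t : ℕ) :
    Stmt (I × Fin n) (C × Fin n) F :=
  ⟨composedTrace σs t, by
    intro h
    have := congrArg List.length h
    simp [composedTrace] at this
    omega⟩

end TSLMC

namespace TSLMC
open scoped Classical

section Aux
variable {V I C F Pi : Type}

theorem eval_app (T : Thy V F) (a : Assign V I C) (f : F) (ts : List (FTerm I C F)) :
    (FTerm.app f ts).eval T a = T.ε f (ts.map (FTerm.eval T a)) := by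
  rw [FTerm.eval]
  congr 1
  simp [List.map_attach_eq_pmap]

theorem embed_app (f : F) (ts : List (FTerm I C F)) :
    (FTerm.app f ts).embed = FTerm.app f (ts.map FTerm.embed) := by
  rw [FTerm.embed]
  congr 1
  simp [List.map_attach_eq_pmap]

theorem rename_app (π : Pi) (f : F) (ts : List (FTerm I C F)) :
    (FTerm.app f ts).rename π = FTerm.app f (ts.map (FTerm.rename π)) := by
  rw [FTerm.rename]
  congr 1
  simp [List.map_attach_eq_pmap]

/-- Projection of an extended assignment back to inputs/cells. -/
def projA (a : Assign V Empty (CStar I C)) : Assign V I C := fun x =>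
  a (.inr (.inl (match x with | .inl i => .inr i | .inr c => .inl c)))

theorem eval_embed (T : Thy V F) :
    ∀ (τ : FTerm I C F) (a : Assign V Empty (CStar I C)),
      τ.embed.eval T a = τ.eval T (projA a)
  | .inp i, a => by simp [FTerm.embed, FTerm.eval, projA]
  | .cell c, a => by simp [FTerm.embed, FTerm.eval, projA]
  | .app f ts, a => by
      rw [embed_app, eval_app, eval_app, List.map_map]
      congr 1
      refine List.map_congr_left fun t ht => ?_
      exact eval_embed T t a
decreasing_by
  have := List.sizeOf_lt_of_mem ht
  simp only [FTerm.app.sizeOf_spec]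
  omega

/-- Restriction of a hyper-assignment to a single trace variable. -/
def restrA (π : Pi) (a : Assign V (I × Pi) (C × Pi)) : Assign V I C := fun x =>
  a (match x with | .inl i => .inl (i, π) | .inr c => .inr (c, π))

theorem eval_rename (T : Thy V F) (π : Pi) :
    ∀ (τ : FTerm I C F) (a : Assign V (I × Pi) (C × Pi)),
      (τ.rename π).eval T a = τ.eval T (restrA π a)
  | .inp i, a => by simp [FTerm.rename, FTerm.eval, restrA]
  | .cell c, a => by simp [FTerm.rename, FTerm.eval, restrA]
  | .app f ts, a => by
      rw [rename_app, eval_app, eval_app, List.map_map]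
      congr 1
      refine List.map_congr_left fun t ht => ?_
      exact eval_rename T π t a
decreasing_by
  have := List.sizeOf_lt_of_mem ht
  simp only [FTerm.app.sizeOf_spec]
  omega

theorem conjTerm_eval (T : Thy V F) (O : Ops V F T) (a : Assign V Empty (CStar I C)) :
    ∀ l : List (FTerm Empty (CStar I C) F),
      (conjTerm T O l).eval T a = T.vtrue ↔ ∀ τ ∈ l, τ.eval T a = T.vtrue
  | [] => by simp [conjTerm, eval_app, O.htrue]
  | τ :: ts => by
      rw [conjTerm, eval_app]
      simp only [List.map_cons, List.map_nil, O.hand, List.mem_cons]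
      constructor
      · intro h
        by_cases hc : τ.eval T a = T.vtrue ∧ (conjTerm T O ts).eval T a = T.vtrue
        · intro τ' hτ'
          rcases hτ' with h1 | h2
          · rw [h1]; exact hc.1
          · exact ((conjTerm_eval T O a ts).1 hc.2) τ' h2
        · rw [if_neg hc] at h
          exact absurd h.symm O.tne
      · intro h
        have h1 : τ.eval T a = T.vtrue := h τ (Or.inl rfl)
        have h2 : (conjTerm T O ts).eval T a = T.vtrue :=
          (conjTerm_eval T O a ts).2 fun τ' hτ' => h τ' (Or.inr hτ')
        rw [if_pos ⟨h1, h2⟩]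

theorem neg_eval (T : Thy V F) (O : Ops V F T) (a : Assign V I C) (τ : FTerm I C F) :
    (FTerm.app O.fneg [τ]).eval T a = T.vtrue ↔ ¬ τ.eval T a = T.vtrue := by
  rw [eval_app]
  simp only [List.map_cons, List.map_nil, O.hneg]
  by_cases h : τ.eval T a = T.vtrue
  · rw [if_pos h]
    exact ⟨fun hh => absurd hh (Ne.symm O.tne), fun hh => absurd h hh⟩
  · simp [h]

theorem eq_eval (T : Thy V F) (O : Ops V F T) (a : Assign V I C) (τ1 τ2 : FTerm I C F) :
    (FTerm.app O.feq [τ1, τ2]).eval T a = T.vtrue ↔ τ1.eval T a = τ2.eval T a := by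
  rw [eval_app]
  simp only [List.map_cons, List.map_nil, O.heq]
  by_cases h : τ1.eval T a = τ2.eval T a
  · simp [h]
  · rw [if_neg h]
    exact ⟨fun hh => absurd hh (Ne.symm O.tne), fun hh => absurd hh h⟩

theorem eval_cell (T : Thy V F) (a : Assign V I C) (c : C) :
    (FTerm.cell c).eval T a = a (.inr c) := by simp [FTerm.eval]

theorem getElem_append_pen {α : Type*} (L : List α) (a1 a2 : α) (i : ℕ)
    (h : i = L.length) {h2 : i < (L ++ [a1, a2]).length} : (L ++ [a1, a2])[i] = a1 := by
  subst h
  rw [List.getElem_append_right (le_refl _)]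
  simp

theorem getElem_append_last {α : Type*} (L : List α) (a1 a2 : α) (i : ℕ)
    (h : i = L.length + 1) {h2 : i < (L ++ [a1, a2]).length} : (L ++ [a1, a2])[i] = a2 := by
  subst h
  rw [List.getElem_append_right (by omega)]
  simp

theorem my_indexOf_lt {α : Type*} [BEq α] [LawfulBEq α] {l : List α} {a : α} (h : a ∈ l) :
    l.idxOf a < l.length :=
  List.findIdx_lt_length_of_exists ⟨a, h, by simp⟩

theorem my_getElem_indexOf {α : Type*} [BEq α] [LawfulBEq α] {l : List α} {a : α}
    (h : l.idxOf a < l.length) : l[l.idxOf a] = a := by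
  have := List.findIdx_getElem (w := h)
  exact eq_of_beq this

/-- Division/mod uniqueness helper. -/
theorem divmod_key {B : ℕ} (hB : 0 < B) (q r : ℕ) (hr : r < B) :
    (B * q + r) / B = q ∧ (B * q + r) % B = r := by
  constructor
  · rw [Nat.mul_add_div hB, Nat.div_eq_of_lt hr, Nat.add_zero]
  · rw [Nat.mul_add_mod, Nat.mod_eq_of_lt hr]

/-- `fpos` for constant block length. -/
theorem fpos_const {σ : ℕ → Stmt I C F} {B : ℕ} (hB : 0 < B)
    (hlen : ∀ t, ((σ t).1).length = B) : ∀ j, fpos σ j = (j / B, j % B)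
  | 0 => by simp [fpos]
  | j + 1 => by
      have ih := fpos_const hB hlen j
      have hdm := Nat.div_add_mod j B
      have hmod : j % B < B := Nat.mod_lt _ hB
      rw [fpos, ih]
      simp only [hlen]
      by_cases h : j % B + 1 < B
      · rw [if_pos h]
        have he : j + 1 = B * (j / B) + (j % B + 1) := by omega
        rw [he, (divmod_key hB _ _ h).1, (divmod_key hB _ _ h).2]
      · rw [if_neg h]
        have he : j + 1 = B * (j / B + 1) + 0 := by
          rw [Nat.mul_add, Nat.mul_one]
          omega
        rw [he, (divmod_key hB _ _ hB).1, (divmod_key hB _ _ hB).2]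

end Aux


section Adapt
variable {V I C F : Type} {n : ℕ}
variable (T : Thy V F) (υ : List ((C × Fin n) × FTerm (I × Fin n) (C × Fin n) F))
  (inps : List (I × Fin n)) (init : Assign V I C)
  (initC : Assign V Empty (CStar (I × Fin n) (C × Fin n)))
  (ζs : Fin n → ℕ → Assign V I C)

/-- The value of a `tmp` cell freshly computed in block `b`. -/
noncomputable def newTmpD (b p : ℕ) : V :=
  ((υ[p]?).map fun u => u.2.eval T (prevA (liftInit init) (assembleH ζs) b)).getD
    (initC (.inr (.inr p)))

/-- The value of a `tmp` cell carried over from the previous block. -/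
noncomputable def oldTmpD (b p : ℕ) : V :=
  match b with
  | 0 => initC (.inr (.inr p))
  | b' + 1 => newTmpD T υ init initC ζs b' p

theorem newTmpD_high (b p : ℕ) (hp : υ.length ≤ p) :
    newTmpD T υ init initC ζs b p = initC (.inr (.inr p)) := by
  simp [newTmpD, List.getElem?_eq_none hp]

theorem oldTmpD_high (b p : ℕ) (hp : υ.length ≤ p) :
    oldTmpD T υ init initC ζs b p = initC (.inr (.inr p)) := by
  cases b with
  | zero => rfl
  | succ b' => exact newTmpD_high T υ init initC ζs b' p hp

theorem hadapt_tmp (b i p : ℕ) (hi : i < υ.length + n + inps.length + 2) :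
    hadapt T υ inps init initC ζs ((υ.length + n + inps.length + 2) * b + i)
      (.inr (.inr p)) =
    if i < υ.length then
      (if p ≤ i then newTmpD T υ init initC ζs b p else oldTmpD T υ init initC ζs b p)
    else newTmpD T υ init initC ζs b p := by
  have hB : 0 < υ.length + n + inps.length + 2 := by omega
  have h1 := (divmod_key hB b i hi).1
  have h2 := (divmod_key hB b i hi).2
  simp only [hadapt, h1, h2, newTmpD, oldTmpD]

theorem hadapt_cell (b i : ℕ) (cj : C × Fin n)
    (hi : i < υ.length + n + inps.length + 2) :
    hadapt T υ inps init initC ζs ((υ.length + n + inps.length + 2) * b + i)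
      (.inr (.inl (.inl cj))) =
    if i < υ.length then prevA (liftInit init) (assembleH ζs) b (.inr cj)
    else if i < υ.length + n then
      (if (cj.2 : ℕ) < i - υ.length + 1 then ζs cj.2 b (.inr cj.1)
       else prevA (liftInit init) (assembleH ζs) b (.inr cj))
    else assembleH ζs b (.inr cj) := by
  have hB : 0 < υ.length + n + inps.length + 2 := by omega
  have h1 := (divmod_key hB b i hi).1
  have h2 := (divmod_key hB b i hi).2
  simp only [hadapt, h1, h2]

theorem hadapt_inp (b i : ℕ) (ij : I × Fin n)
    (hi : i < υ.length + n + inps.length + 2) :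
    hadapt T υ inps init initC ζs ((υ.length + n + inps.length + 2) * b + i)
      (.inr (.inl (.inr ij))) =
    if i < υ.length + n then prevA (liftInit init) (assembleH ζs) b (.inl ij)
    else if i < υ.length + n + inps.length then
      (if inps.idxOf ij < i - (υ.length + n) + 1 then assembleH ζs b (.inl ij)
       else prevA (liftInit init) (assembleH ζs) b (.inl ij))
    else assembleH ζs b (.inl ij) := by
  have hB : 0 < υ.length + n + inps.length + 2 := by omega
  have h1 := (divmod_key hB b i hi).1
  have h2 := (divmod_key hB b i hi).2
  simp only [hadapt, h1, h2]

theorem prevA_succ {V I C : Type} (init : Assign V I C) (ζ : ℕ → Assign V I C) (t : ℕ) :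
    prevA init ζ (t + 1) = ζ t := rfl

/-- The previous assignment at the start of block `b`. -/
theorem prev_block (hic : ∀ p : C × Fin n, initC (.inr (.inl (.inl p))) = init (.inr p.1))
    (hii : ∀ p : I × Fin n, initC (.inr (.inl (.inr p))) = init (.inl p.1)) (b : ℕ) :
    (∀ p : ℕ, prevA initC (hadapt T υ inps init initC ζs)
        ((υ.length + n + inps.length + 2) * b) (.inr (.inr p)) =
        oldTmpD T υ init initC ζs b p) ∧
    (∀ cj : C × Fin n, prevA initC (hadapt T υ inps init initC ζs)
        ((υ.length + n + inps.length + 2) * b) (.inr (.inl (.inl cj))) =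
        prevA (liftInit init) (assembleH ζs) b (.inr cj)) ∧
    (∀ ij : I × Fin n, prevA initC (hadapt T υ inps init initC ζs)
        ((υ.length + n + inps.length + 2) * b) (.inr (.inl (.inr ij))) =
        prevA (liftInit init) (assembleH ζs) b (.inl ij)) := by
  cases b with
  | zero =>
      simp only [Nat.mul_zero]
      refine ⟨fun p => ?_, fun cj => ?_, fun ij => ?_⟩
      · rfl
      · exact hic cj
      · exact hii ij
  | succ b' =>
      have hrw : (υ.length + n + inps.length + 2) * (b' + 1) =
          ((υ.length + n + inps.length + 2) * b' +
            (υ.length + n + inps.length + 1)) + 1 := by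
        rw [Nat.mul_add, Nat.mul_one]; omega
      have hi : υ.length + n + inps.length + 1 < υ.length + n + inps.length + 2 := by omega
      refine ⟨fun p => ?_, fun cj => ?_, fun ij => ?_⟩
      · rw [hrw, prevA_succ]
        rw [hadapt_tmp T υ inps init initC ζs b' _ p hi]
        rw [if_neg (by omega)]
        rfl
      · rw [hrw, prevA_succ]
        rw [hadapt_cell T υ inps init initC ζs b' _ cj hi]
        rw [if_neg (by omega), if_neg (by omega)]
        rfl
      · rw [hrw, prevA_succ]
        rw [hadapt_inp T υ inps init initC ζs b' _ ij hi]
        rw [if_neg (by omega), if_neg (by omega)]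
        rfl

theorem restr_assemble (j : Fin n) (b : ℕ) :
    restrA j (assembleH ζs b) = ζs j b := by
  funext x
  cases x <;> rfl

theorem restr_prev (j : Fin n) (b : ℕ) :
    restrA j (prevA (liftInit init) (assembleH ζs) b) = prevA init (ζs j) b := by
  cases b with
  | zero => funext x; cases x <;> rfl
  | succ b' => exact restr_assemble ζs j b'

end Adapt

theorem hyper_adapted_matches
    {V I C F : Type} (T : Thy V F) (O : Ops V F T) {n : ℕ}
    (init : Assign V I C)
    (initC : Assign V Empty (CStar (I × Fin n) (C × Fin n)))
    (hic : ∀ p : C × Fin n, initC (.inr (.inl (.inl p))) = init (.inr p.1))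
    (hii : ∀ p : I × Fin n, initC (.inr (.inl (.inr p))) = init (.inl p.1))
    (ρ : List (FTerm (I × Fin n) (C × Fin n) F)) (hρ : ∀ τ ∈ ρ, IsPredTerm T τ)
    (υ : List ((C × Fin n) × FTerm (I × Fin n) (C × Fin n) F))
    (inps : List (I × Fin n)) (hinps : ∀ p : I × Fin n, p ∈ inps) (hnd : inps.Nodup)
    (σs : Fin n → ℕ → Stmt0 I C F) (ζs : Fin n → ℕ → Assign V I C)
    (hζs : ∀ j, Matches T init (ζs j) (σs j)) :
    MatchesC T initC (hadapt T υ inps init initC ζs)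
      (fun t => combine T O ρ υ inps (composedTrace σs t)
        (SeqW T (liftInit init) (assembleH ζs) {τ | τ ∈ ρ} {u | u ∈ υ} t)) := by
  classical
  have hB : 0 < υ.length + n + inps.length + 2 := by omega
  have hlen : ∀ t, ((combine T O ρ υ inps (composedTrace σs t)
      (SeqW T (liftInit init) (assembleH ζs) {τ | τ ∈ ρ} {u | u ∈ υ} t)).1).length
      = υ.length + n + inps.length + 2 := by
    intro t
    simp [combine, composedTrace]
    omega
  intro j
  obtain ⟨b, i, hi, rfl⟩ : ∃ b i, i < υ.length + n + inps.length + 2 ∧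
      (υ.length + n + inps.length + 2) * b + i = j :=
    ⟨j / (υ.length + n + inps.length + 2), j % (υ.length + n + inps.length + 2),
      Nat.mod_lt _ hB, Nat.div_add_mod j _⟩
  have hfp : fpos (fun t => combine T O ρ υ inps (composedTrace σs t)
      (SeqW T (liftInit init) (assembleH ζs) {τ | τ ∈ ρ} {u | u ∈ υ} t))
      ((υ.length + n + inps.length + 2) * b + i) = (b, i) := by
    rw [fpos_const hB hlen, (divmod_key hB b i hi).1, (divmod_key hB b i hi).2]
  have hlt : i < ((combine T O ρ υ inps (composedTrace σs b)
      (SeqW T (liftInit init) (assembleH ζs) {τ | τ ∈ ρ} {u | u ∈ υ} b)).1).length := by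
    rw [hlen]; exact hi
  have hflat : flatten (fun t => combine T O ρ υ inps (composedTrace σs t)
      (SeqW T (liftInit init) (assembleH ζs) {τ | τ ∈ ρ} {u | u ∈ υ} t))
      ((υ.length + n + inps.length + 2) * b + i) =
      ((combine T O ρ υ inps (composedTrace σs b)
      (SeqW T (liftInit init) (assembleH ζs) {τ | τ ∈ ρ} {u | u ∈ υ} b)).1)[i] := by
    simp only [flatten, hfp]
    exact List.getD_eq_getElem _ _ hlt
  unfold matchesAt
  rw [hflat]
  have hprevtmp : ∀ p : ℕ, prevA initC (hadapt T υ inps init initC ζs)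
      ((υ.length + n + inps.length + 2) * b + i) (.inr (.inr p)) =
      if i = 0 then oldTmpD T υ init initC ζs b p
      else if i - 1 < υ.length then
        (if p ≤ i - 1 then newTmpD T υ init initC ζs b p
         else oldTmpD T υ init initC ζs b p)
      else newTmpD T υ init initC ζs b p := by
    intro p
    cases i with
    | zero =>
        rw [if_pos rfl]
        exact (prev_block T υ inps init initC ζs hic hii b).1 p
    | succ i' =>
        rw [if_neg (Nat.succ_ne_zero i'),
          show ((υ.length + n + inps.length + 2) * b + (i' + 1)) =
            ((υ.length + n + inps.length + 2) * b + i') + 1 from rfl, prevA_succ,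
          hadapt_tmp T υ inps init initC ζs b i' p (by omega)]
        simp only [Nat.succ_sub_one]
  have hprevcell : ∀ cj : C × Fin n, prevA initC (hadapt T υ inps init initC ζs)
      ((υ.length + n + inps.length + 2) * b + i) (.inr (.inl (.inl cj))) =
      if i = 0 then prevA (liftInit init) (assembleH ζs) b (.inr cj)
      else if i - 1 < υ.length then prevA (liftInit init) (assembleH ζs) b (.inr cj)
      else if i - 1 < υ.length + n then
        (if (cj.2 : ℕ) < i - 1 - υ.length + 1 then ζs cj.2 b (.inr cj.1)
         else prevA (liftInit init) (assembleH ζs) b (.inr cj))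
      else assembleH ζs b (.inr cj) := by
    intro cj
    cases i with
    | zero =>
        rw [if_pos rfl]
        exact (prev_block T υ inps init initC ζs hic hii b).2.1 cj
    | succ i' =>
        rw [if_neg (Nat.succ_ne_zero i'),
          show ((υ.length + n + inps.length + 2) * b + (i' + 1)) =
            ((υ.length + n + inps.length + 2) * b + i') + 1 from rfl, prevA_succ,
          hadapt_cell T υ inps init initC ζs b i' cj (by omega)]
        simp only [Nat.succ_sub_one]
  have hprevinp : ∀ ij : I × Fin n, prevA initC (hadapt T υ inps init initC ζs)
      ((υ.length + n + inps.length + 2) * b + i) (.inr (.inl (.inr ij))) =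
      if i = 0 then prevA (liftInit init) (assembleH ζs) b (.inl ij)
      else if i - 1 < υ.length + n then prevA (liftInit init) (assembleH ζs) b (.inl ij)
      else if i - 1 < υ.length + n + inps.length then
        (if inps.idxOf ij < i - 1 - (υ.length + n) + 1 then assembleH ζs b (.inl ij)
         else prevA (liftInit init) (assembleH ζs) b (.inl ij))
      else assembleH ζs b (.inl ij) := by
    intro ij
    cases i with
    | zero =>
        rw [if_pos rfl]
        exact (prev_block T υ inps init initC ζs hic hii b).2.2 ij
    | succ i' =>
        rw [if_neg (Nat.succ_ne_zero i'),
          show ((υ.length + n + inps.length + 2) * b + (i' + 1)) =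
            ((υ.length + n + inps.length + 2) * b + i') + 1 from rfl, prevA_succ,
          hadapt_inp T υ inps init initC ζs b i' ij (by omega)]
        simp only [Nat.succ_sub_one]
  rcases Nat.lt_or_ge i υ.length with hc1 | hc1
  · -- save_values: tmp assignment
    have hget : ((combine T O ρ υ inps (composedTrace σs b)
        (SeqW T (liftInit init) (assembleH ζs) {τ | τ ∈ ρ} {u | u ∈ υ} b)).1)[i]'hlt =
        Stmt0.assign (Sum.inr i) (υ[i]'hc1).2.embed := by
      simp only [combine]
      rw [List.getElem_append_left (by simp [composedTrace]; omega),
        List.getElem_append_left (by simp [composedTrace]; omega),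
        List.getElem_append_left (by simp; omega), List.getElem_mapIdx]
    rw [hget]
    have hproj : projA (prevA initC (hadapt T υ inps init initC ζs)
        ((υ.length + n + inps.length + 2) * b + i)) =
        prevA (liftInit init) (assembleH ζs) b := by
      funext x
      cases x with
      | inl ij =>
          show prevA initC (hadapt T υ inps init initC ζs) _ (.inr (.inl (.inr ij))) = _
          rw [hprevinp ij]
          rcases Nat.eq_zero_or_pos i with h0 | h0
          · rw [if_pos h0]
          · rw [if_neg (by omega), if_pos (by omega)]
      | inr cj =>
          show prevA initC (hadapt T υ inps init initC ζs) _ (.inr (.inl (.inl cj))) = _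
          rw [hprevcell cj]
          rcases Nat.eq_zero_or_pos i with h0 | h0
          · rw [if_pos h0]
          · rw [if_neg (by omega), if_pos (by omega)]
    refine ⟨?_, fun c' hc' => ?_⟩
    · rw [hadapt_tmp T υ inps init initC ζs b i i hi, if_pos hc1, if_pos (le_refl i),
        eval_embed, hproj]
      simp [newTmpD, List.getElem?_eq_getElem hc1]
    · rcases c' with (cj | ij) | p
      · rw [hadapt_cell T υ inps init initC ζs b i cj hi, if_pos hc1, hprevcell cj]
        rcases Nat.eq_zero_or_pos i with h0 | h0
        · rw [if_pos h0]
        · rw [if_neg (by omega), if_pos (by omega)]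
      · rw [hadapt_inp T υ inps init initC ζs b i ij hi, if_pos (by omega), hprevinp ij]
        rcases Nat.eq_zero_or_pos i with h0 | h0
        · rw [if_pos h0]
        · rw [if_neg (by omega), if_pos (by omega)]
      · have hpi : p ≠ i := fun h => hc' (by rw [h])
        rw [hadapt_tmp T υ inps init initC ζs b i p hi, if_pos hc1, hprevtmp p]
        rcases Nat.eq_zero_or_pos i with h0 | h0
        · rw [if_pos h0, if_neg (by omega)]
        · rw [if_neg (show ¬ i = 0 by omega), if_pos (show i - 1 < υ.length by omega)]
          by_cases hple : p ≤ i - 1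
          · rw [if_pos (show p ≤ i by omega), if_pos hple]
          · rw [if_neg (show ¬ p ≤ i by omega), if_neg hple]
  · rcases Nat.lt_or_ge i (υ.length + n) with hc2 | hc2
    · -- composed statements
      obtain ⟨j', hj'n, hieq⟩ : ∃ j' : ℕ, j' < n ∧ i = υ.length + j' :=
        ⟨i - υ.length, by omega, by omega⟩
      subst hieq
      have hm := hζs (⟨j', hj'n⟩ : Fin n) b
      have hrestr : restrA (⟨j', hj'n⟩ : Fin n) (projA (prevA initC (hadapt T υ inps init initC ζs)
          ((υ.length + n + inps.length + 2) * b + (υ.length + j')))) =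
          prevA init (ζs (⟨j', hj'n⟩ : Fin n)) b := by
        funext x
        cases x with
        | inl i0 =>
            show prevA initC (hadapt T υ inps init initC ζs) _
              (.inr (.inl (.inr (i0, (⟨j', hj'n⟩ : Fin n))))) = _
            rw [hprevinp (i0, (⟨j', hj'n⟩ : Fin n))]
            have hPx : prevA (liftInit init) (assembleH ζs) b (.inl (i0, (⟨j', hj'n⟩ : Fin n))) =
                prevA init (ζs (⟨j', hj'n⟩ : Fin n)) b (.inl i0) :=
              congrFun (restr_prev init ζs (⟨j', hj'n⟩ : Fin n) b) (.inl i0)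
            by_cases h0 : υ.length + j' = 0
            · rw [if_pos h0, hPx]
            · rw [if_neg h0, if_pos (show υ.length + j' - 1 < υ.length + n by omega), hPx]
        | inr c0 =>
            show prevA initC (hadapt T υ inps init initC ζs) _
              (.inr (.inl (.inl (c0, (⟨j', hj'n⟩ : Fin n))))) = _
            rw [hprevcell (c0, (⟨j', hj'n⟩ : Fin n))]
            have hPx : prevA (liftInit init) (assembleH ζs) b (.inr (c0, (⟨j', hj'n⟩ : Fin n))) =
                prevA init (ζs (⟨j', hj'n⟩ : Fin n)) b (.inr c0) :=
              congrFun (restr_prev init ζs (⟨j', hj'n⟩ : Fin n) b) (.inr c0)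
            by_cases h0 : υ.length + j' = 0
            · rw [if_pos h0, hPx]
            · rw [if_neg h0]
              by_cases hin : υ.length + j' - 1 < υ.length
              · rw [if_pos hin, hPx]
              · rw [if_neg hin, if_pos (show υ.length + j' - 1 < υ.length + n by omega),
                  if_neg (show ¬ (j' : ℕ) < υ.length + j' - 1 - υ.length + 1 by omega), hPx]
      cases hσ : σs (⟨j', hj'n⟩ : Fin n) b with
      | assert τ =>
        have hget : ((combine T O ρ υ inps (composedTrace σs b)
            (SeqW T (liftInit init) (assembleH ζs) {τ | τ ∈ ρ} {u | u ∈ υ} b)).1)[υ.length + j']'hlt =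
            Stmt0.assert ((τ.rename (⟨j', hj'n⟩ : Fin n)).embed) := by
          simp only [combine]
          rw [List.getElem_append_left (by simp only [List.length_append, List.length_mapIdx, List.length_map, composedTrace, List.length_finRange, List.length_cons, List.length_nil]; omega),
            List.getElem_append_left (by simp only [List.length_append, List.length_mapIdx, List.length_map, composedTrace, List.length_finRange, List.length_cons, List.length_nil]; omega),
            List.getElem_append_right (by simp only [List.length_append, List.length_mapIdx, List.length_map, composedTrace, List.length_finRange, List.length_cons, List.length_nil]; omega), List.getElem_map]
          simp only [composedTrace]
          rw [List.getElem_map, List.getElem_finRange]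
          simp only [List.length_mapIdx, Fin.cast_mk, Nat.add_sub_cancel_left]
          rw [hσ]
          rfl
        unfold matchesAt at hm
        rw [hσ] at hm
        rw [hget]
        refine ⟨?_, fun c' => ?_⟩
        · rw [eval_embed T, eval_rename T, hrestr]
          exact hm.1
        · rcases c' with (⟨c0, j2⟩ | ij) | p
          · rw [hadapt_cell T υ inps init initC ζs b _ (c0, j2) hi,
              if_neg (show ¬ υ.length + j' < υ.length by omega),
              if_pos (show υ.length + j' < υ.length + n by omega), hprevcell (c0, j2)]
            by_cases hlt2 : (j2 : ℕ) < υ.length + j' - υ.length + 1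
            · rw [if_pos hlt2]
              by_cases heq2 : j2 = (⟨j', hj'n⟩ : Fin n)
              · subst heq2
                have hPx : prevA (liftInit init) (assembleH ζs) b (.inr (c0, (⟨j', hj'n⟩ : Fin n))) =
                    prevA init (ζs (⟨j', hj'n⟩ : Fin n)) b (.inr c0) :=
                  congrFun (restr_prev init ζs (⟨j', hj'n⟩ : Fin n) b) (.inr c0)
                by_cases h0 : υ.length + j' = 0
                · rw [if_pos h0, hPx]; exact hm.2 c0
                · rw [if_neg h0]
                  by_cases hin : υ.length + j' - 1 < υ.length
                  · rw [if_pos hin, hPx]; exact hm.2 c0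
                  · rw [if_neg hin, if_pos (show υ.length + j' - 1 < υ.length + n by omega),
                      if_neg (show ¬ (j' : ℕ) < υ.length + j' - 1 - υ.length + 1 by omega), hPx]
                    exact hm.2 c0
              · have hj2lt : (j2 : ℕ) < j' := by
                  rcases Nat.lt_or_ge (j2 : ℕ) j' with h | h
                  · exact h
                  · exact absurd (Fin.ext (by omega : (j2 : ℕ) = j')) heq2
                rw [if_neg (show ¬ υ.length + j' = 0 by omega),
                  if_neg (show ¬ υ.length + j' - 1 < υ.length by omega),
                if_pos (show υ.length + j' - 1 < υ.length + n by omega),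
                  if_pos (show (j2 : ℕ) < υ.length + j' - 1 - υ.length + 1 by omega)]
            · rw [if_neg hlt2]
              by_cases h0 : υ.length + j' = 0
              · rw [if_pos h0]
              · rw [if_neg h0]
                by_cases hin : υ.length + j' - 1 < υ.length
                · rw [if_pos hin]
                · rw [if_neg hin, if_pos (show υ.length + j' - 1 < υ.length + n by omega),
                    if_neg (show ¬ (j2 : ℕ) < υ.length + j' - 1 - υ.length + 1 by omega)]
          · rw [hadapt_inp T υ inps init initC ζs b _ ij hi,
              if_pos (show υ.length + j' < υ.length + n by omega), hprevinp ij]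
            by_cases h0 : υ.length + j' = 0
            · rw [if_pos h0]
            · rw [if_neg h0, if_pos (show υ.length + j' - 1 < υ.length + n by omega)]
          · rw [hadapt_tmp T υ inps init initC ζs b _ p hi,
              if_neg (show ¬ υ.length + j' < υ.length by omega), hprevtmp p]
            by_cases h0 : υ.length + j' = 0
            · rw [if_pos h0, oldTmpD_high T υ init initC ζs b p (by omega),
                newTmpD_high T υ init initC ζs b p (by omega)]
            · rw [if_neg h0]
              by_cases hin : υ.length + j' - 1 < υ.length
              · by_cases hple : p ≤ υ.length + j' - 1
                · rw [if_pos hin, if_pos hple]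
                · rw [if_pos hin, if_neg hple,
                    newTmpD_high T υ init initC ζs b p (by omega),
                    oldTmpD_high T υ init initC ζs b p (by omega)]
              · rw [if_neg hin]
      | assign c τ =>
        have hget : ((combine T O ρ υ inps (composedTrace σs b)
            (SeqW T (liftInit init) (assembleH ζs) {τ | τ ∈ ρ} {u | u ∈ υ} b)).1)[υ.length + j']'hlt =
            Stmt0.assign (Sum.inl (Sum.inl (c, (⟨j', hj'n⟩ : Fin n)))) ((τ.rename (⟨j', hj'n⟩ : Fin n)).embed) := by
          simp only [combine]
          rw [List.getElem_append_left (by simp only [List.length_append, List.length_mapIdx, List.length_map, composedTrace, List.length_finRange, List.length_cons, List.length_nil]; omega),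
            List.getElem_append_left (by simp only [List.length_append, List.length_mapIdx, List.length_map, composedTrace, List.length_finRange, List.length_cons, List.length_nil]; omega),
            List.getElem_append_right (by simp only [List.length_append, List.length_mapIdx, List.length_map, composedTrace, List.length_finRange, List.length_cons, List.length_nil]; omega), List.getElem_map]
          simp only [composedTrace]
          rw [List.getElem_map, List.getElem_finRange]
          simp only [List.length_mapIdx, Fin.cast_mk, Nat.add_sub_cancel_left]
          rw [hσ]
          rfl
        unfold matchesAt at hm
        rw [hσ] at hm
        rw [hget]
        refine ⟨?_, fun c' hc' => ?_⟩
        · rw [hadapt_cell T υ inps init initC ζs b _ (c, (⟨j', hj'n⟩ : Fin n)) hi,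
            if_neg (show ¬ υ.length + j' < υ.length by omega),
            if_pos (show υ.length + j' < υ.length + n by omega),
            if_pos (show (j' : ℕ) < υ.length + j' - υ.length + 1 by omega),
            eval_embed T, eval_rename T, hrestr]
          exact hm.1
        · rcases c' with (⟨c0, j2⟩ | ij) | p
          · rw [hadapt_cell T υ inps init initC ζs b _ (c0, j2) hi,
              if_neg (show ¬ υ.length + j' < υ.length by omega),
              if_pos (show υ.length + j' < υ.length + n by omega), hprevcell (c0, j2)]
            by_cases hlt2 : (j2 : ℕ) < υ.length + j' - υ.length + 1
            · rw [if_pos hlt2]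
              by_cases heq2 : j2 = (⟨j', hj'n⟩ : Fin n)
              · subst heq2
                have hne : c0 ≠ c := fun h => hc' (by rw [h])
                have hPx : prevA (liftInit init) (assembleH ζs) b (.inr (c0, (⟨j', hj'n⟩ : Fin n))) =
                    prevA init (ζs (⟨j', hj'n⟩ : Fin n)) b (.inr c0) :=
                  congrFun (restr_prev init ζs (⟨j', hj'n⟩ : Fin n) b) (.inr c0)
                by_cases h0 : υ.length + j' = 0
                · rw [if_pos h0, hPx]; exact hm.2 c0 hne
                · rw [if_neg h0]
                  by_cases hin : υ.length + j' - 1 < υ.length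
                  · rw [if_pos hin, hPx]; exact hm.2 c0 hne
                  · rw [if_neg hin, if_pos (show υ.length + j' - 1 < υ.length + n by omega),
                      if_neg (show ¬ (j' : ℕ) < υ.length + j' - 1 - υ.length + 1 by omega), hPx]
                    exact hm.2 c0 hne
              · have hj2lt : (j2 : ℕ) < j' := by
                  rcases Nat.lt_or_ge (j2 : ℕ) j' with h | h
                  · exact h
                  · exact absurd (Fin.ext (by omega : (j2 : ℕ) = j')) heq2
                rw [if_neg (show ¬ υ.length + j' = 0 by omega),
                  if_neg (show ¬ υ.length + j' - 1 < υ.length by omega),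
                if_pos (show υ.length + j' - 1 < υ.length + n by omega),
                  if_pos (show (j2 : ℕ) < υ.length + j' - 1 - υ.length + 1 by omega)]
            · rw [if_neg hlt2]
              by_cases h0 : υ.length + j' = 0
              · rw [if_pos h0]
              · rw [if_neg h0]
                by_cases hin : υ.length + j' - 1 < υ.length
                · rw [if_pos hin]
                · rw [if_neg hin, if_pos (show υ.length + j' - 1 < υ.length + n by omega),
                    if_neg (show ¬ (j2 : ℕ) < υ.length + j' - 1 - υ.length + 1 by omega)]
          · rw [hadapt_inp T υ inps init initC ζs b _ ij hi,
              if_pos (show υ.length + j' < υ.length + n by omega), hprevinp ij]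
            by_cases h0 : υ.length + j' = 0
            · rw [if_pos h0]
            · rw [if_neg h0, if_pos (show υ.length + j' - 1 < υ.length + n by omega)]
          · rw [hadapt_tmp T υ inps init initC ζs b _ p hi,
              if_neg (show ¬ υ.length + j' < υ.length by omega), hprevtmp p]
            by_cases h0 : υ.length + j' = 0
            · rw [if_pos h0, oldTmpD_high T υ init initC ζs b p (by omega),
                newTmpD_high T υ init initC ζs b p (by omega)]
            · rw [if_neg h0]
              by_cases hin : υ.length + j' - 1 < υ.length
              · by_cases hple : p ≤ υ.length + j' - 1
                · rw [if_pos hin, if_pos hple]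
                · rw [if_pos hin, if_neg hple,
                    newTmpD_high T υ init initC ζs b p (by omega),
                    oldTmpD_high T υ init initC ζs b p (by omega)]
              · rw [if_neg hin]
      | havoc c =>
        have hget : ((combine T O ρ υ inps (composedTrace σs b)
            (SeqW T (liftInit init) (assembleH ζs) {τ | τ ∈ ρ} {u | u ∈ υ} b)).1)[υ.length + j']'hlt =
            Stmt0.havoc (Sum.inl (Sum.inl (c, (⟨j', hj'n⟩ : Fin n)))) := by
          simp only [combine]
          rw [List.getElem_append_left (by simp only [List.length_append, List.length_mapIdx, List.length_map, composedTrace, List.length_finRange, List.length_cons, List.length_nil]; omega),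
            List.getElem_append_left (by simp only [List.length_append, List.length_mapIdx, List.length_map, composedTrace, List.length_finRange, List.length_cons, List.length_nil]; omega),
            List.getElem_append_right (by simp only [List.length_append, List.length_mapIdx, List.length_map, composedTrace, List.length_finRange, List.length_cons, List.length_nil]; omega), List.getElem_map]
          simp only [composedTrace]
          rw [List.getElem_map, List.getElem_finRange]
          simp only [List.length_mapIdx, Fin.cast_mk, Nat.add_sub_cancel_left]
          rw [hσ]
          rfl
        unfold matchesAt at hm
        rw [hσ] at hm
        rw [hget]
        intro c' hc'
        rcases c' with (⟨c0, j2⟩ | ij) | p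
        · rw [hadapt_cell T υ inps init initC ζs b _ (c0, j2) hi,
            if_neg (show ¬ υ.length + j' < υ.length by omega),
            if_pos (show υ.length + j' < υ.length + n by omega), hprevcell (c0, j2)]
          by_cases hlt2 : (j2 : ℕ) < υ.length + j' - υ.length + 1
          · rw [if_pos hlt2]
            by_cases heq2 : j2 = (⟨j', hj'n⟩ : Fin n)
            · subst heq2
              have hne : c0 ≠ c := fun h => hc' (by rw [h])
              have hPx : prevA (liftInit init) (assembleH ζs) b (.inr (c0, (⟨j', hj'n⟩ : Fin n))) =
                  prevA init (ζs (⟨j', hj'n⟩ : Fin n)) b (.inr c0) :=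
                congrFun (restr_prev init ζs (⟨j', hj'n⟩ : Fin n) b) (.inr c0)
              by_cases h0 : υ.length + j' = 0
              · rw [if_pos h0, hPx]; exact hm c0 hne
              · rw [if_neg h0]
                by_cases hin : υ.length + j' - 1 < υ.length
                · rw [if_pos hin, hPx]; exact hm c0 hne
                · rw [if_neg hin, if_pos (show υ.length + j' - 1 < υ.length + n by omega),
                    if_neg (show ¬ (j' : ℕ) < υ.length + j' - 1 - υ.length + 1 by omega), hPx]
                  exact hm c0 hne
            · have hj2lt : (j2 : ℕ) < j' := by
                rcases Nat.lt_or_ge (j2 : ℕ) j' with h | h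
                · exact h
                · exact absurd (Fin.ext (by omega : (j2 : ℕ) = j')) heq2
              rw [if_neg (show ¬ υ.length + j' = 0 by omega),
                if_neg (show ¬ υ.length + j' - 1 < υ.length by omega),
                if_pos (show υ.length + j' - 1 < υ.length + n by omega),
                if_pos (show (j2 : ℕ) < υ.length + j' - 1 - υ.length + 1 by omega)]
          · rw [if_neg hlt2]
            by_cases h0 : υ.length + j' = 0
            · rw [if_pos h0]
            · rw [if_neg h0]
              by_cases hin : υ.length + j' - 1 < υ.length
              · rw [if_pos hin]
              · rw [if_neg hin, if_pos (show υ.length + j' - 1 < υ.length + n by omega),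
                  if_neg (show ¬ (j2 : ℕ) < υ.length + j' - 1 - υ.length + 1 by omega)]
        · rw [hadapt_inp T υ inps init initC ζs b _ ij hi,
            if_pos (show υ.length + j' < υ.length + n by omega), hprevinp ij]
          by_cases h0 : υ.length + j' = 0
          · rw [if_pos h0]
          · rw [if_neg h0, if_pos (show υ.length + j' - 1 < υ.length + n by omega)]
        · rw [hadapt_tmp T υ inps init initC ζs b _ p hi,
            if_neg (show ¬ υ.length + j' < υ.length by omega), hprevtmp p]
          by_cases h0 : υ.length + j' = 0
          · rw [if_pos h0, oldTmpD_high T υ init initC ζs b p (by omega),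
              newTmpD_high T υ init initC ζs b p (by omega)]
          · rw [if_neg h0]
            by_cases hin : υ.length + j' - 1 < υ.length
            · by_cases hple : p ≤ υ.length + j' - 1
              · rw [if_pos hin, if_pos hple]
              · rw [if_pos hin, if_neg hple,
                  newTmpD_high T υ init initC ζs b p (by omega),
                  oldTmpD_high T υ init initC ζs b p (by omega)]
            · rw [if_neg hin]
    · rcases Nat.lt_or_ge i (υ.length + n + inps.length) with hc3 | hc3
      · -- new_inputs: havoc
        obtain ⟨q, hq, hieq⟩ : ∃ q, q < inps.length ∧ i = υ.length + n + q :=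
          ⟨i - (υ.length + n), by omega, by omega⟩
        subst hieq
        have hget : ((combine T O ρ υ inps (composedTrace σs b)
            (SeqW T (liftInit init) (assembleH ζs) {τ | τ ∈ ρ} {u | u ∈ υ} b)).1)[υ.length + n + q]'hlt =
            Stmt0.havoc (Sum.inl (Sum.inr (inps[q]'hq))) := by
          simp only [combine]
          rw [List.getElem_append_left (by simp only [List.length_append, List.length_mapIdx, List.length_map, composedTrace, List.length_finRange, List.length_cons, List.length_nil]; omega),
            List.getElem_append_right (by simp only [List.length_append, List.length_mapIdx, List.length_map, composedTrace, List.length_finRange, List.length_cons, List.length_nil]; omega),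
            List.getElem_map]
          simp only [List.length_append, List.length_mapIdx, List.length_map, composedTrace, List.length_finRange, List.length_cons, List.length_nil, Nat.add_sub_cancel_left]
        rw [hget]
        intro c' hc'
        rcases c' with (⟨c0, j2⟩ | ij) | p
        · have hn0 : 0 < n := j2.pos
          have hj2n : (j2 : ℕ) < n := j2.isLt
          rw [hadapt_cell T υ inps init initC ζs b _ (c0, j2) hi,
            if_neg (show ¬ υ.length + n + q < υ.length by omega),
            if_neg (show ¬ υ.length + n + q < υ.length + n by omega), hprevcell (c0, j2),
            if_neg (show ¬ υ.length + n + q = 0 by omega),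
            if_neg (show ¬ υ.length + n + q - 1 < υ.length by omega)]
          by_cases hmn : υ.length + n + q - 1 < υ.length + n
          · rw [if_pos hmn, if_pos (show (j2 : ℕ) < υ.length + n + q - 1 - υ.length + 1 by omega)]
            rfl
          · rw [if_neg hmn]
        · have hmem := hinps ij
          have hlen2 : inps.idxOf ij < inps.length := my_indexOf_lt hmem
          have hne2 : inps.idxOf ij ≠ q := by
            intro h
            subst h
            exact hc' (by rw [my_getElem_indexOf hlen2])
          rw [hadapt_inp T υ inps init initC ζs b _ ij hi,
            if_neg (show ¬ υ.length + n + q < υ.length + n by omega),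
            if_pos (show υ.length + n + q < υ.length + n + inps.length by omega),
            hprevinp ij]
          by_cases hidx : inps.idxOf ij < q
          · rw [if_pos (show inps.idxOf ij < υ.length + n + q - (υ.length + n) + 1 by omega),
              if_neg (show ¬ υ.length + n + q = 0 by omega),
              if_neg (show ¬ υ.length + n + q - 1 < υ.length + n by omega),
              if_pos (show υ.length + n + q - 1 < υ.length + n + inps.length by omega),
              if_pos (show inps.idxOf ij < υ.length + n + q - 1 - (υ.length + n) + 1 by omega)]
          · rw [if_neg (show ¬ inps.idxOf ij < υ.length + n + q - (υ.length + n) + 1 by omega)]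
            by_cases h0 : υ.length + n + q = 0
            · rw [if_pos h0]
            · rw [if_neg h0]
              by_cases hmn : υ.length + n + q - 1 < υ.length + n
              · rw [if_pos hmn]
              · rw [if_neg hmn,
                  if_pos (show υ.length + n + q - 1 < υ.length + n + inps.length by omega),
                  if_neg (show ¬ inps.idxOf ij < υ.length + n + q - 1 - (υ.length + n) + 1 by omega)]
        · rw [hadapt_tmp T υ inps init initC ζs b _ p hi,
            if_neg (show ¬ υ.length + n + q < υ.length by omega), hprevtmp p]
          by_cases h0 : υ.length + n + q = 0
          · rw [if_pos h0, oldTmpD_high T υ init initC ζs b p (by omega),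
              newTmpD_high T υ init initC ζs b p (by omega)]
          · rw [if_neg h0]
            by_cases hin : υ.length + n + q - 1 < υ.length
            · by_cases hple : p ≤ υ.length + n + q - 1
              · rw [if_pos hin, if_pos hple]
              · rw [if_pos hin, if_neg hple,
                  newTmpD_high T υ init initC ζs b p (by omega),
                  oldTmpD_high T υ init initC ζs b p (by omega)]
            · rw [if_neg hin]
      · rcases (by omega : i = υ.length + n + inps.length ∨
            i = υ.length + n + inps.length + 1) with hc4 | hc4
        · -- check_preds
          subst hc4
          have hget : ((combine T O ρ υ inps (composedTrace σs b)
              (SeqW T (liftInit init) (assembleH ζs) {τ | τ ∈ ρ} {u | u ∈ υ} b)).1)[υ.length + n + inps.length]'hlt =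
              Stmt0.assert (conjTerm T O (ρ.map fun τ =>
                if Sum.inl τ ∈ SeqW T (liftInit init) (assembleH ζs) {τ | τ ∈ ρ} {u | u ∈ υ} b then τ.embed
                else FTerm.app O.fneg [τ.embed])) := by
            simp only [combine]
            rw [getElem_append_pen _ _ _ _ (by simp only [List.length_append, List.length_mapIdx, List.length_map, composedTrace, List.length_finRange, List.length_cons, List.length_nil] <;> omega)]
          rw [hget]
          have hproj2 : projA (prevA initC (hadapt T υ inps init initC ζs)
              ((υ.length + n + inps.length + 2) * b + (υ.length + n + inps.length))) = assembleH ζs b := by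
            funext x
            cases x with
            | inl ij =>
                show prevA initC (hadapt T υ inps init initC ζs) _ (.inr (.inl (.inr ij))) = _
                have hmem := hinps ij
                have hlen2 : inps.idxOf ij < inps.length := my_indexOf_lt hmem
                rw [hprevinp ij, if_neg (show ¬ υ.length + n + inps.length = 0 by omega),
                  if_neg (show ¬ υ.length + n + inps.length - 1 < υ.length + n by omega),
                  if_pos (show υ.length + n + inps.length - 1 < υ.length + n + inps.length by omega),
                  if_pos (show inps.idxOf ij < υ.length + n + inps.length - 1 - (υ.length + n) + 1 by omega)]
            | inr cj =>
                obtain ⟨c0, j2⟩ := cj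
                show prevA initC (hadapt T υ inps init initC ζs) _ (.inr (.inl (.inl (c0, j2)))) = _
                have hn0 : 0 < n := j2.pos
                have hj2n : (j2 : ℕ) < n := j2.isLt
                rw [hprevcell (c0, j2), if_neg (show ¬ υ.length + n + inps.length = 0 by omega),
                  if_neg (show ¬ υ.length + n + inps.length - 1 < υ.length by omega)]
                by_cases hmn : υ.length + n + inps.length - 1 < υ.length + n
                · rw [if_pos hmn,
                    if_pos (show (j2 : ℕ) < υ.length + n + inps.length - 1 - υ.length + 1 by omega)]
                  rfl
                · rw [if_neg hmn]
          refine ⟨?_, fun c' => ?_⟩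
          · refine (conjTerm_eval T O _ _).2 fun τ' hτ' => ?_
            obtain ⟨τ0, hτ0ρ, rfl⟩ := List.mem_map.1 hτ'
            by_cases hl : Sum.inl τ0 ∈ SeqW T (liftInit init) (assembleH ζs) {τ | τ ∈ ρ} {u | u ∈ υ} b
            · rw [if_pos hl, eval_embed T, hproj2]
              simp only [SeqW, Set.mem_setOf_eq, Sum.elim_inl, TSL.sat] at hl
              exact hl.2
            · rw [if_neg hl, neg_eval T O, eval_embed T, hproj2]
              intro hcontra
              apply hl
              simp only [SeqW, Set.mem_setOf_eq, Sum.elim_inl, TSL.sat]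
              exact ⟨hτ0ρ, hcontra⟩
          · rcases c' with (⟨c0, j2⟩ | ij) | p
            · have hn0 : 0 < n := j2.pos
              have hj2n : (j2 : ℕ) < n := j2.isLt
              rw [hadapt_cell T υ inps init initC ζs b _ (c0, j2) hi,
                if_neg (show ¬ υ.length + n + inps.length < υ.length by omega),
                if_neg (show ¬ υ.length + n + inps.length < υ.length + n by omega), hprevcell (c0, j2),
                if_neg (show ¬ υ.length + n + inps.length = 0 by omega),
                if_neg (show ¬ υ.length + n + inps.length - 1 < υ.length by omega)]
              by_cases hmn : υ.length + n + inps.length - 1 < υ.length + n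
              · rw [if_pos hmn, if_pos (show (j2 : ℕ) < υ.length + n + inps.length - 1 - υ.length + 1 by omega)]
                rfl
              · rw [if_neg hmn]
            · have hmem := hinps ij
              have hlen2 : inps.idxOf ij < inps.length := my_indexOf_lt hmem
              rw [hadapt_inp T υ inps init initC ζs b _ ij hi,
                if_neg (show ¬ υ.length + n + inps.length < υ.length + n by omega),
                if_neg (show ¬ υ.length + n + inps.length < υ.length + n + inps.length by omega),
                hprevinp ij, if_neg (show ¬ υ.length + n + inps.length = 0 by omega),
                if_neg (show ¬ υ.length + n + inps.length - 1 < υ.length + n by omega),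
                if_pos (show υ.length + n + inps.length - 1 < υ.length + n + inps.length by omega),
                if_pos (show inps.idxOf ij < υ.length + n + inps.length - 1 - (υ.length + n) + 1 by omega)]
            · rw [hadapt_tmp T υ inps init initC ζs b _ p hi,
                if_neg (show ¬ υ.length + n + inps.length < υ.length by omega), hprevtmp p]
              by_cases h0 : υ.length + n + inps.length = 0
              · rw [if_pos h0, oldTmpD_high T υ init initC ζs b p (by omega),
                  newTmpD_high T υ init initC ζs b p (by omega)]
              · rw [if_neg h0]
                by_cases hin : υ.length + n + inps.length - 1 < υ.length
                · by_cases hple : p ≤ υ.length + n + inps.length - 1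
                  · rw [if_pos hin, if_pos hple]
                  · rw [if_pos hin, if_neg hple,
                      newTmpD_high T υ init initC ζs b p (by omega),
                      oldTmpD_high T υ init initC ζs b p (by omega)]
                · rw [if_neg hin]
        · -- check_updates
          subst hc4
          have hget : ((combine T O ρ υ inps (composedTrace σs b)
              (SeqW T (liftInit init) (assembleH ζs) {τ | τ ∈ ρ} {u | u ∈ υ} b)).1)[υ.length + n + inps.length + 1]'hlt =
              Stmt0.assert (conjTerm T O (υ.mapIdx fun j u =>
                let eqt : FTerm Empty (CStar (I × Fin n) (C × Fin n)) F :=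
                  .app O.feq [.cell (Sum.inl (Sum.inl u.1)), .cell (Sum.inr j)]
                if Sum.inr u ∈ SeqW T (liftInit init) (assembleH ζs) {τ | τ ∈ ρ} {u | u ∈ υ} b then eqt else .app O.fneg [eqt])) := by
            simp only [combine]
            rw [getElem_append_last _ _ _ _ (by simp only [List.length_append, List.length_mapIdx, List.length_map, composedTrace, List.length_finRange, List.length_cons, List.length_nil] <;> omega)]
          rw [hget]
          refine ⟨?_, fun c' => ?_⟩
          · refine (conjTerm_eval T O _ _).2 fun τ' hτ' => ?_
            obtain ⟨jdx, hjdx0, hjeq⟩ := List.mem_iff_getElem.1 hτ'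
            have hjdx : jdx < υ.length := by rw [List.length_mapIdx] at hjdx0; exact hjdx0
            rw [List.getElem_mapIdx] at hjeq
            subst hjeq
            rcases hu : υ[jdx]'hjdx with ⟨⟨c1, j1⟩, τ1⟩
            have hnewv : newTmpD T υ init initC ζs b jdx =
                FTerm.eval T (prevA (liftInit init) (assembleH ζs) b) τ1 := by
              simp [newTmpD, List.getElem?_eq_getElem hjdx, hu]
            have hcellv : prevA initC (hadapt T υ inps init initC ζs)
                ((υ.length + n + inps.length + 2) * b + (υ.length + n + inps.length + 1)) (.inr (.inl (.inl (c1, j1)))) =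
                assembleH ζs b (.inr (c1, j1)) := by
              have hn0 : 0 < n := j1.pos
              have hj2n : (j1 : ℕ) < n := j1.isLt
              rw [hprevcell (c1, j1), if_neg (show ¬ υ.length + n + inps.length + 1 = 0 by omega),
                if_neg (show ¬ υ.length + n + inps.length + 1 - 1 < υ.length by omega)]
              by_cases hmn : υ.length + n + inps.length + 1 - 1 < υ.length + n
              · rw [if_pos hmn,
                  if_pos (show (j1 : ℕ) < υ.length + n + inps.length + 1 - 1 - υ.length + 1 by omega)]
                rfl
              · rw [if_neg hmn]
            have htmpv : prevA initC (hadapt T υ inps init initC ζs)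
                ((υ.length + n + inps.length + 2) * b + (υ.length + n + inps.length + 1)) (.inr (.inr jdx)) =
                FTerm.eval T (prevA (liftInit init) (assembleH ζs) b) τ1 := by
              rw [hprevtmp jdx, if_neg (show ¬ υ.length + n + inps.length + 1 = 0 by omega),
                if_neg (show ¬ υ.length + n + inps.length + 1 - 1 < υ.length by omega), hnewv]
            beta_reduce
            try simp only []
            by_cases hl : Sum.inr (((c1, j1), τ1) : (C × Fin n) × FTerm (I × Fin n) (C × Fin n) F)
                ∈ SeqW T (liftInit init) (assembleH ζs) {τ | τ ∈ ρ} {u | u ∈ υ} b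
            · rw [if_pos hl, eq_eval T O, eval_cell, eval_cell, hcellv, htmpv]
              simp only [SeqW, Set.mem_setOf_eq, Sum.elim_inr, TSL.sat] at hl
              exact hl.2.symm
            · rw [if_neg hl, neg_eval T O, eq_eval T O, eval_cell, eval_cell, hcellv, htmpv]
              intro hcontra
              apply hl
              simp only [SeqW, Set.mem_setOf_eq, Sum.elim_inr, TSL.sat, hu]
              exact ⟨by rw [← hu]; exact List.getElem_mem _, hcontra.symm⟩
          · rcases c' with (⟨c0, j2⟩ | ij) | p
            · have hn0 : 0 < n := j2.pos
              have hj2n : (j2 : ℕ) < n := j2.isLt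
              rw [hadapt_cell T υ inps init initC ζs b _ (c0, j2) hi,
                if_neg (show ¬ υ.length + n + inps.length + 1 < υ.length by omega),
                if_neg (show ¬ υ.length + n + inps.length + 1 < υ.length + n by omega), hprevcell (c0, j2),
                if_neg (show ¬ υ.length + n + inps.length + 1 = 0 by omega),
                if_neg (show ¬ υ.length + n + inps.length + 1 - 1 < υ.length by omega)]
              by_cases hmn : υ.length + n + inps.length + 1 - 1 < υ.length + n
              · rw [if_pos hmn, if_pos (show (j2 : ℕ) < υ.length + n + inps.length + 1 - 1 - υ.length + 1 by omega)]
                rfl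
              · rw [if_neg hmn]
            · have hmem := hinps ij
              have hlen2 : inps.idxOf ij < inps.length := my_indexOf_lt hmem
              rw [hadapt_inp T υ inps init initC ζs b _ ij hi,
                if_neg (show ¬ υ.length + n + inps.length + 1 < υ.length + n by omega),
                if_neg (show ¬ υ.length + n + inps.length + 1 < υ.length + n + inps.length by omega),
                hprevinp ij, if_neg (show ¬ υ.length + n + inps.length + 1 = 0 by omega),
                if_neg (show ¬ υ.length + n + inps.length + 1 - 1 < υ.length + n by omega),
                if_neg (show ¬ υ.length + n + inps.length + 1 - 1 < υ.length + n + inps.length by omega)]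
            · rw [hadapt_tmp T υ inps init initC ζs b _ p hi,
                if_neg (show ¬ υ.length + n + inps.length + 1 < υ.length by omega), hprevtmp p]
              by_cases h0 : υ.length + n + inps.length + 1 = 0
              · rw [if_pos h0, oldTmpD_high T υ init initC ζs b p (by omega),
                  newTmpD_high T υ init initC ζs b p (by omega)]
              · rw [if_neg h0]
                by_cases hin : υ.length + n + inps.length + 1 - 1 < υ.length
                · by_cases hple : p ≤ υ.length + n + inps.length + 1 - 1
                  · rw [if_pos hin, if_pos hple]
                  · rw [if_pos hin, if_neg hple,
                      newTmpD_high T υ init initC ζs b p (by omega),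
                      oldTmpD_high T υ init initC ζs b p (by omega)]
                · rw [if_neg hin]

end TSLMC
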